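/- Let E, A ∈ ℝ^{n×n} with A − sE regular, B₂ ∈ ℝ^{n×m}, C₂ ∈ ℝ^{p×n}, D₂₂ ∈ ℝ^{p×m}, and let G₂₂ := C₂(sE − A)^{−1}B₂ + D₂₂ ∈ ℝ(s)^{p×m}. Suppose F ∈ ℝ^{m×n} and H ∈ ℝ^{n×p} are such that the pencils A_F − sE := A + B₂F − sE and A_H − sE := A + HC₂ − sE are both admissible. Define the eight rational matrices: Ỹ := F(sE − A_H)^{−1}(−B₂ − HD₂₂) + I_m, X̃ := −F(sE − A_H)^{−1}H, Ñ := C₂(sE − A_H)^{−1}(B₂ + HD₂₂) + D₂₂, M̃ := C₂(sE − A_H)^{−1}H + I_p, M := F(sE − A_F)^{−1}B₂ + I_m, X := −F(sE − A_F)^{−1}H, N := (C₂ + D₂₂F)(sE − A_F)^{−1}B₂ + D₂₂, Y := −(C₂ + D₂₂F)(sE − A_F)^{−1}H + I_p. Then (N, Ñ, M, M̃, X, X̃, Y, Ỹ) is a doubly coprime factorization of G₂₂ over RH∞: all eight matrices are stable, det M ≢ 0, det M̃ ≢ 0, G₂₂ = N M^{−1} = M̃^{−1} Ñ, and the Bézout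 identity [[Ỹ, −X̃],[−Ñ, M̃]]·[[M, X],[N, Y]] = I_{m+p} holds. -/

import Mathlib

open Matrix Polynomial
open scoped Kronecker

set_option synthInstance.maxHeartbeats 400000
set_option maxHeartbeats 1000000

noncomputable section

/-- The field ℝ(s) of real rational functions. -/
abbrev RF := RatFunc ℝ

/-- A rational function is proper if the degree of its numerator (in lowest terms)
is at most the degree of its denominator. -/
def RFproper (f : RF) : Prop := f.num.degree ≤ f.denom.degree

/-- A rational function is stable: proper and every complex root of its denominator
has strictly negative real part. -/
def RFstable (f : RF) : Prop :=
  RFproper f ∧ ∀ z : ℂ, Polynomial.aeval z f.denom = 0 → z.re < 0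

/-- A rational matrix is stable (lies in RH∞) iff every entry is stable. -/
def MStable {p m : Type*} (G : Matrix p m RF) : Prop := ∀ i j, RFstable (G i j)

/-- A real matrix viewed as a matrix over ℝ(s). -/
def toRF {p m : Type*} (M : Matrix p m ℝ) : Matrix p m RF := M.map (algebraMap ℝ RF)

/-- A real matrix viewed as a matrix over ℂ. -/
def toC {p m : Type*} (M : Matrix p m ℝ) : Matrix p m ℂ := M.map (fun x => (x : ℂ))

/-- The pencil A - s E as a matrix over ℝ(s). -/
def pencilRF {n : Type*} (A E : Matrix n n ℝ) : Matrix n n RF :=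
  toRF A - (RatFunc.X : RF) • toRF E

/-- Admissible pencil: regular, every finite generalized eigenvalue in the open left
half-plane, and deg det(sE - A) = rank E (all infinite generalized eigenvalues have
partial multiplicity at most 1). -/
def Admissible {n : Type*} [Fintype n] [DecidableEq n] (A E : Matrix n n ℝ) : Prop :=
  (pencilRF A E).det ≠ 0 ∧
  (∀ z : ℂ, (toC A - z • toC E).det = 0 → z.re < 0) ∧
  (Matrix.of fun i j => Polynomial.X * Polynomial.C (E i j) - Polynomial.C (A i j)).det.natDegree
    = E.rank

/-- Transfer function matrix C (sE - A)⁻¹ B + D of a descriptor realization. -/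
def tfm {n p m : Type*} [Fintype n] [DecidableEq n] (E A : Matrix n n ℝ)
    (B : Matrix n m ℝ) (C : Matrix p n ℝ) (D : Matrix p m ℝ) : Matrix p m RF :=
  toRF C * ((RatFunc.X : RF) • toRF E - toRF A)⁻¹ * toRF B + toRF D

/-- (N, Ñ, M, M̃, X, X̃, Y, Ỹ) is a doubly coprime factorization of G over RH∞. -/
def IsDCF {p m : Type*} [Fintype p] [Fintype m] [DecidableEq p] [DecidableEq m]
    (G : Matrix p m RF)
    (N : Matrix p m RF) (Ntil : Matrix p m RF)
    (M : Matrix m m RF) (Mtil : Matrix p p RF)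
    (X : Matrix m p RF) (Xtil : Matrix m p RF)
    (Y : Matrix p p RF) (Ytil : Matrix m m RF) : Prop :=
  MStable N ∧ MStable Ntil ∧ MStable M ∧ MStable Mtil ∧
  MStable X ∧ MStable Xtil ∧ MStable Y ∧ MStable Ytil ∧
  M.det ≠ 0 ∧ Mtil.det ≠ 0 ∧ G = N * M⁻¹ ∧ G = Mtil⁻¹ * Ntil ∧
  Matrix.fromBlocks Ytil (-Xtil) (-Ntil) Mtil * Matrix.fromBlocks M X N Y = 1

lemma natDegree_det_le_sum {ι : Type*} [Fintype ι] [DecidableEq ι]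
    (M : Matrix ι ι ℝ[X]) (d : ι → ℕ)
    (hd : ∀ i j, (M i j).natDegree ≤ d i) : M.det.natDegree ≤ ∑ i, d i := by
  rw [Matrix.det_apply']
  refine natDegree_sum_le_of_forall_le _ _ (fun σ _ => ?_)
  refine (natDegree_mul_le).trans ?_
  have h1 : (((Equiv.Perm.sign σ : ℤ) : ℝ[X])).natDegree = 0 := natDegree_intCast _
  rw [h1, zero_add]
  refine (natDegree_prod_le _ _).trans ?_
  calc ∑ i, (M (σ i) i).natDegree ≤ ∑ i, d (σ i) :=
        Finset.sum_le_sum (fun i _ => hd (σ i) i)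
    _ = ∑ i, d i := Equiv.sum_comp σ d

lemma exists_rank_factorization {n : ℕ} (E : Matrix (Fin n) (Fin n) ℝ) :
    ∃ (U : Matrix (Fin n) (Fin E.rank) ℝ) (V : Matrix (Fin E.rank) (Fin n) ℝ), E = U * V := by
  classical
  set W := LinearMap.range E.mulVecLin with hW
  have hfr : Module.finrank ℝ W = E.rank := rfl
  let b : Module.Basis (Fin E.rank) ℝ W := Module.finBasisOfFinrankEq ℝ W hfr
  have hmem : ∀ j, (fun i => E i j) ∈ W := by
    intro j
    refine ⟨Pi.single j 1, ?_⟩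
    simp [Matrix.mulVecLin_apply, Matrix.mulVec_single]
    rfl
  refine ⟨fun i k => (b k : Fin n → ℝ) i, fun k j => b.repr ⟨_, hmem j⟩ k, ?_⟩
  ext i j
  have := b.sum_repr ⟨_, hmem j⟩
  have h2 := congrArg (fun (w : W) => (w : Fin n → ℝ) i) this
  simp only [Submodule.coe_sum, Submodule.coe_smul, Finset.sum_apply, Pi.smul_apply,
    smul_eq_mul] at h2
  change E i j = ∑ k, (b k : Fin n → ℝ) i * b.repr ⟨_, hmem j⟩ k
  rw [← h2]
  exact Finset.sum_congr rfl (fun k _ => mul_comm _ _)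

lemma natDegree_det_pencil_le {n : ℕ} (E A : Matrix (Fin n) (Fin n) ℝ) :
    (Matrix.of fun i j => X * Polynomial.C (E i j) - Polynomial.C (A i j)).det.natDegree
      ≤ E.rank := by
  classical
  obtain ⟨U, V, hUV⟩ := exists_rank_factorization E
  set Up := U.map (Polynomial.C : ℝ →+* ℝ[X]) with hUp
  set Vp := V.map (Polynomial.C : ℝ →+* ℝ[X]) with hVp
  set Ap := A.map (Polynomial.C : ℝ →+* ℝ[X]) with hAp
  have hUV2 : Up * Vp = E.map (Polynomial.C : ℝ →+* ℝ[X]) := by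
    rw [hUp, hVp, ← Matrix.map_mul, ← hUV]
  have hM : (Matrix.of fun i j => X * Polynomial.C (E i j) - Polynomial.C (A i j))
      = (-Ap) - (-Up) * ((X : ℝ[X]) • Vp) := by
    rw [Matrix.neg_mul, sub_neg_eq_add, Matrix.mul_smul, hUV2]
    refine Matrix.ext fun i j => ?_
    simp only [Matrix.of_apply, Matrix.add_apply, Matrix.neg_apply, Matrix.smul_apply,
      Matrix.map_apply, hAp, smul_eq_mul]
    ring
  rw [hM, ← Matrix.det_fromBlocks_one₁₁ ((X : ℝ[X]) • Vp) (-Up) (-Ap)]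
  have := natDegree_det_le_sum (Matrix.fromBlocks 1 ((X : ℝ[X]) • Vp) (-Up) (-Ap))
      (Sum.elim (fun _ => 1) (fun _ => 0)) ?_
  · simpa using this
  · rintro (k | i) (l | j)
    · simp only [Matrix.fromBlocks_apply₁₁, Sum.elim_inl, Matrix.one_apply]
      split <;> simp
    · simp only [Matrix.fromBlocks_apply₁₂, Sum.elim_inl, Matrix.smul_apply, smul_eq_mul]
      refine (natDegree_mul_le).trans ?_
      simp [natDegree_X_le, hVp]
    · simp [hUp]
    · simp [hAp]

lemma rank_updateRow_zero_le {n : ℕ} (E : Matrix (Fin n) (Fin n) ℝ) (l : Fin n) :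
    (E.updateRow l 0).rank ≤ E.rank := by
  have h : E.updateRow l 0 = (Matrix.diagonal (fun a => if a = l then (0:ℝ) else 1)) * E := by
    ext a b
    rw [Matrix.diagonal_mul]
    by_cases h : a = l <;> simp [h]
  rw [h]
  exact Matrix.rank_mul_le_right _ _

set_option maxHeartbeats 4000000 in
lemma stable_div (q p : ℝ[X]) (hp : p ≠ 0) (hdeg : q.degree ≤ p.degree)
    (hroots : ∀ z : ℂ, aeval z p = 0 → z.re < 0) :
    RFstable (algebraMap ℝ[X] RF q / algebraMap ℝ[X] RF p) := by
  set f := algebraMap ℝ[X] RF q / algebraMap ℝ[X] RF p with hf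
  have hpz : algebraMap ℝ[X] RF p ≠ 0 := RatFunc.algebraMap_ne_zero hp
  have hdz : algebraMap ℝ[X] RF f.denom ≠ 0 := RatFunc.algebraMap_ne_zero f.denom_ne_zero
  have h1 : algebraMap ℝ[X] RF q / algebraMap ℝ[X] RF p
      = algebraMap ℝ[X] RF f.num / algebraMap ℝ[X] RF f.denom := by
    rw [RatFunc.num_div_denom]
  have key : q * f.denom = f.num * p := by
    apply RatFunc.algebraMap_injective
    rw [_root_.map_mul, _root_.map_mul]
    exact (div_eq_div_iff hpz hdz).mp h1
  have hdvd : f.denom ∣ p := by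
    have h2 : f.denom ∣ f.num * p := Dvd.intro_left q key
    exact ((RatFunc.isCoprime_num_denom f).symm).dvd_of_dvd_mul_left h2
  constructor
  · by_cases hnum : f.num = 0
    · simp [RFproper, hnum]
    · have hq : q ≠ 0 := by
        intro h
        apply hnum
        have : f = 0 := by rw [hf, h, map_zero, zero_div]
        rw [this, RatFunc.num_zero]
      have hnd : q.natDegree + f.denom.natDegree = f.num.natDegree + p.natDegree := by
        have := congrArg Polynomial.natDegree key
        rwa [natDegree_mul hq f.denom_ne_zero, natDegree_mul hnum hp] at this
      have hqp : q.natDegree ≤ p.natDegree := natDegree_le_natDegree hdeg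
      have : f.num.natDegree ≤ f.denom.natDegree := by omega
      rw [RFproper, degree_eq_natDegree hnum, degree_eq_natDegree f.denom_ne_zero]
      exact_mod_cast this
  · intro z hz
    obtain ⟨t, ht⟩ := hdvd
    apply hroots
    rw [ht, _root_.map_mul, hz, zero_mul]

set_option maxHeartbeats 8000000 in
lemma mstable_tfm {n p m : ℕ} {E A : Matrix (Fin n) (Fin n) ℝ} (hadm : Admissible A E)
    (B : Matrix (Fin n) (Fin m) ℝ) (C2 : Matrix (Fin p) (Fin n) ℝ) (D : Matrix (Fin p) (Fin m) ℝ) :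
    MStable (tfm E A B C2 D) := by
  classical
  obtain ⟨hreg, hroots, hdeg⟩ := hadm
  set Pm : Matrix (Fin n) (Fin n) ℝ[X] :=
    Matrix.of (fun i j => X * Polynomial.C (E i j) - Polynomial.C (A i j)) with hPm
  have halgC : ∀ r : ℝ, algebraMap ℝ RF r = algebraMap ℝ[X] RF (Polynomial.C r) := fun r => by
    rw [IsScalarTower.algebraMap_apply ℝ ℝ[X] RF, Polynomial.algebraMap_eq]
  have hpen : (RatFunc.X : RF) • toRF E - toRF A = Pm.map (algebraMap ℝ[X] RF) := by
    refine Matrix.ext fun i j => ?_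
    simp only [Matrix.sub_apply, Matrix.smul_apply, Matrix.map_apply, toRF, hPm,
      Matrix.of_apply, map_sub, _root_.map_mul, RatFunc.algebraMap_X, smul_eq_mul, halgC]
  have hdetmap : (Pm.map (algebraMap ℝ[X] RF)).det = algebraMap ℝ[X] RF Pm.det := by
    rw [← RingHom.mapMatrix_apply, ← RingHom.map_det]
  have hp0 : Pm.det ≠ 0 := by
    intro h
    apply hreg
    have h2 : pencilRF A E = -(Pm.map (algebraMap ℝ[X] RF)) := by
      rw [← hpen]; unfold pencilRF; rw [neg_sub]
    rw [h2, Matrix.det_neg, hdetmap, h, map_zero, mul_zero]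
  have hroots0 : ∀ z : ℂ, aeval z Pm.det = 0 → z.re < 0 := by
    intro z hz
    have h2 : Pm.map (⇑(Polynomial.aeval z : ℝ[X] →ₐ[ℝ] ℂ)) = z • toC E - toC A := by
      refine Matrix.ext fun i j => ?_
      simp only [Matrix.map_apply, hPm, Matrix.of_apply, Matrix.sub_apply, Matrix.smul_apply,
        toC, map_sub, _root_.map_mul, Polynomial.aeval_X, Polynomial.aeval_C,
        smul_eq_mul, Complex.coe_algebraMap]
    apply hroots
    have h3 : toC A - z • toC E = -(z • toC E - toC A) := (neg_sub _ _).symm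
    rw [h3, Matrix.det_neg, ← h2, ← AlgHom.mapMatrix_apply, ← AlgHom.map_det, hz, mul_zero]
  have hdetne : (Pm.map (algebraMap ℝ[X] RF)).det ≠ 0 := by
    rw [hdetmap]; exact RatFunc.algebraMap_ne_zero hp0
  have hinv : (Pm.map (algebraMap ℝ[X] RF))⁻¹
      = (algebraMap ℝ[X] RF Pm.det)⁻¹ • (Pm.adjugate.map (algebraMap ℝ[X] RF)) := by
    rw [Matrix.inv_def, hdetmap, Ring.inverse_eq_inv]
    congr 1
    rw [← RingHom.mapMatrix_apply, ← RingHom.map_adjugate, RingHom.mapMatrix_apply]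
  set Q : Matrix (Fin p) (Fin m) ℝ[X] :=
    C2.map (Polynomial.C : ℝ →+* ℝ[X]) * Pm.adjugate * B.map (Polynomial.C : ℝ →+* ℝ[X]) with hQ
  have hentry : ∀ i j, tfm E A B C2 D i j
      = algebraMap ℝ[X] RF (Q i j + Pm.det * Polynomial.C (D i j))
        / algebraMap ℝ[X] RF Pm.det := by
    intro i j
    have hC : toRF C2 = (C2.map (Polynomial.C : ℝ →+* ℝ[X])).map (algebraMap ℝ[X] RF) := by
      refine Matrix.ext fun a b => ?_; simp [toRF, halgC]
    have hB : toRF B = (B.map (Polynomial.C : ℝ →+* ℝ[X])).map (algebraMap ℝ[X] RF) := by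
      refine Matrix.ext fun a b => ?_; simp [toRF, halgC]
    have e1 : tfm E A B C2 D i j
        = ((algebraMap ℝ[X] RF Pm.det)⁻¹ • (Q.map (algebraMap ℝ[X] RF))) i j
          + algebraMap ℝ[X] RF (Polynomial.C (D i j)) := by
      unfold tfm
      rw [hpen, hinv, hC, hB, Matrix.mul_smul, Matrix.smul_mul, ← Matrix.map_mul,
        ← Matrix.map_mul, ← hQ]
      rw [Matrix.add_apply]
      simp [toRF, Matrix.map_apply, halgC]
    rw [e1, Matrix.smul_apply, Matrix.map_apply, smul_eq_mul, map_add, _root_.map_mul]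
    have hne : algebraMap ℝ[X] RF Pm.det ≠ 0 := RatFunc.algebraMap_ne_zero hp0
    field_simp
  intro i j
  rw [hentry i j]
  refine stable_div _ _ hp0 ?_ hroots0
  have hadj : ∀ k l, (Pm.adjugate k l).natDegree ≤ E.rank := by
    intro k l
    rw [Matrix.adjugate_apply]
    have hupd : Pm.updateRow l (Pi.single k (1:ℝ[X]))
        = Matrix.of fun a b => X * Polynomial.C ((E.updateRow l 0) a b)
            - Polynomial.C ((A.updateRow l (-(Pi.single k (1:ℝ)))) a b) := by
      refine Matrix.ext fun a b => ?_
      by_cases hb : a = l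
      · subst hb
        simp only [Matrix.updateRow_self, Matrix.of_apply, Pi.zero_apply, map_zero, mul_zero,
          map_neg, zero_sub, neg_neg, Pi.neg_apply, Pi.single_apply]
        split <;> simp
      · simp [Matrix.updateRow_ne hb, hPm]
    rw [hupd]
    exact (natDegree_det_pencil_le _ _).trans (rank_updateRow_zero_le E l)
  have hQdeg : (Q i j).natDegree ≤ E.rank := by
    have he : Q i j = ∑ l, (∑ k, Polynomial.C (C2 i k) * Pm.adjugate k l)
        * Polynomial.C (B l j) := by
      simp [hQ, Matrix.mul_apply, Matrix.map_apply, Finset.sum_mul]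
    rw [he]
    refine natDegree_sum_le_of_forall_le _ _ fun l _ => ?_
    refine (natDegree_mul_C_le _ _).trans ?_
    refine natDegree_sum_le_of_forall_le _ _ fun k _ => ?_
    exact (natDegree_C_mul_le _ _).trans (hadj k l)
  have h1 : (Q i j + Pm.det * Polynomial.C (D i j)).natDegree ≤ E.rank :=
    (natDegree_add_le _ _).trans
      (max_le hQdeg ((natDegree_mul_C_le _ _).trans hdeg.le))
  rw [degree_eq_natDegree hp0, hdeg]
  exact degree_le_natDegree.trans (by exact_mod_cast h1)

lemma toRF_add {p m : Type*} (A B : Matrix p m ℝ) : toRF (A + B) = toRF A + toRF B := by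
  refine Matrix.ext fun i j => ?_; simp [toRF]
lemma toRF_mul {p m q : Type*} [Fintype m] (A : Matrix p m ℝ) (B : Matrix m q ℝ) :
    toRF (A * B) = toRF A * toRF B := by
  refine Matrix.ext fun i j => ?_; simp [toRF, Matrix.mul_apply]
lemma toRF_neg {p m : Type*} (A : Matrix p m ℝ) : toRF (-A) = -toRF A := by
  refine Matrix.ext fun i j => ?_; simp [toRF]
lemma toRF_zero {p m : Type*} : toRF (0 : Matrix p m ℝ) = 0 := by
  refine Matrix.ext fun i j => ?_; simp [toRF]
lemma toRF_one {n : Type*} [Fintype n] [DecidableEq n] : toRF (1 : Matrix n n ℝ) = 1 := by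
  refine Matrix.ext fun i j => ?_
  by_cases h : i = j <;> simp [toRF, Matrix.one_apply, h]

set_option maxHeartbeats 16000000 in
lemma bez_algebra {n m p : ℕ} (S : Matrix (Fin n) (Fin n) RF) (b : Matrix (Fin n) (Fin m) RF)
    (c : Matrix (Fin p) (Fin n) RF) (d : Matrix (Fin p) (Fin m) RF)
    (f : Matrix (Fin m) (Fin n) RF) (hm : Matrix (Fin n) (Fin p) RF)
    (hdS : S.det ≠ 0) (hdF : (S - b * f).det ≠ 0) (hdH : (S - hm * c).det ≠ 0) :
    (f * (S - b * f)⁻¹ * b + 1).det ≠ 0 ∧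
    (c * (S - hm * c)⁻¹ * hm + 1).det ≠ 0 ∧
    (c * S⁻¹ * b + d
      = ((c + d * f) * (S - b * f)⁻¹ * b + d) * (f * (S - b * f)⁻¹ * b + 1)⁻¹) ∧
    (c * S⁻¹ * b + d
      = (c * (S - hm * c)⁻¹ * hm + 1)⁻¹ * (c * (S - hm * c)⁻¹ * (b + hm * d) + d)) ∧
    (Matrix.fromBlocks
        (f * (S - hm * c)⁻¹ * -(b + hm * d) + 1) (-(-(f) * (S - hm * c)⁻¹ * hm + 0))
        (-(c * (S - hm * c)⁻¹ * (b + hm * d) + d)) (c * (S - hm * c)⁻¹ * hm + 1)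
      * Matrix.fromBlocks
        (f * (S - b * f)⁻¹ * b + 1) (-(f) * (S - b * f)⁻¹ * hm + 0)
        ((c + d * f) * (S - b * f)⁻¹ * b + d) (-(c + d * f) * (S - b * f)⁻¹ * hm + 1)
      = 1) := by
  classical
  set SF := S - b * f with hSFd
  set SH := S - hm * c with hSHd
  set T := S⁻¹ with hTd
  set TF := SF⁻¹ with hTFd
  set TH := SH⁻¹ with hTHd
  have hST : S * T = 1 := Matrix.mul_nonsing_inv _ (isUnit_iff_ne_zero.mpr hdS)
  have hTS : T * S = 1 := Matrix.nonsing_inv_mul _ (isUnit_iff_ne_zero.mpr hdS)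
  have hSFT : SF * TF = 1 := Matrix.mul_nonsing_inv _ (isUnit_iff_ne_zero.mpr hdF)
  have hTSF : TF * SF = 1 := Matrix.nonsing_inv_mul _ (isUnit_iff_ne_zero.mpr hdF)
  have hSHT : SH * TH = 1 := Matrix.mul_nonsing_inv _ (isUnit_iff_ne_zero.mpr hdH)
  have hTSH : TH * SH = 1 := Matrix.nonsing_inv_mul _ (isUnit_iff_ne_zero.mpr hdH)
  have rule_bf : ∀ {k : Type} [Fintype k] (x : Matrix (Fin n) k RF),
      b * (f * x) = S * x - SF * x := by
    intro k _ x
    rw [← Matrix.sub_mul, hSFd, sub_sub_cancel, Matrix.mul_assoc]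
  have rule_hc : ∀ {k : Type} [Fintype k] (x : Matrix (Fin n) k RF),
      hm * (c * x) = S * x - SH * x := by
    intro k _ x
    rw [← Matrix.sub_mul, hSHd, sub_sub_cancel, Matrix.mul_assoc]
  have rS : ∀ {k : Type} [Fintype k] (x : Matrix (Fin n) k RF), S * (T * x) = x := by
    intro k _ x; rw [← Matrix.mul_assoc, hST, Matrix.one_mul]
  have rS' : ∀ {k : Type} [Fintype k] (x : Matrix (Fin n) k RF), T * (S * x) = x := by
    intro k _ x; rw [← Matrix.mul_assoc, hTS, Matrix.one_mul]
  have rF : ∀ {k : Type} [Fintype k] (x : Matrix (Fin n) k RF), SF * (TF * x) = x := by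
    intro k _ x; rw [← Matrix.mul_assoc, hSFT, Matrix.one_mul]
  have rF' : ∀ {k : Type} [Fintype k] (x : Matrix (Fin n) k RF), TF * (SF * x) = x := by
    intro k _ x; rw [← Matrix.mul_assoc, hTSF, Matrix.one_mul]
  have rH : ∀ {k : Type} [Fintype k] (x : Matrix (Fin n) k RF), SH * (TH * x) = x := by
    intro k _ x; rw [← Matrix.mul_assoc, hSHT, Matrix.one_mul]
  have rH' : ∀ {k : Type} [Fintype k] (x : Matrix (Fin n) k RF), TH * (SH * x) = x := by
    intro k _ x; rw [← Matrix.mul_assoc, hTSH, Matrix.one_mul]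
  -- inverse of M
  have hMW : (f * TF * b + 1) * (1 - f * (T * b)) = 1 := by
    simp only [Matrix.mul_add, Matrix.add_mul, Matrix.mul_sub, Matrix.sub_mul,
      Matrix.mul_assoc, Matrix.mul_one, Matrix.one_mul, Matrix.mul_neg, Matrix.neg_mul,
      rule_bf, rule_hc, rS, rS', rF, rF', rH, rH']
    abel
  have hMinv : (f * TF * b + 1)⁻¹ = 1 - f * (T * b) := Matrix.inv_eq_right_inv hMW
  have hMdet : (f * TF * b + 1).det ≠ 0 := by
    have hd : (f * TF * b + 1).det * (1 - f * (T * b)).det = 1 := by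
      rw [← Matrix.det_mul, hMW, Matrix.det_one]
    exact left_ne_zero_of_mul_eq_one hd
  have hMtW : (c * TH * hm + 1) * (1 - c * (T * hm)) = 1 := by
    simp only [Matrix.mul_add, Matrix.add_mul, Matrix.mul_sub, Matrix.sub_mul,
      Matrix.mul_assoc, Matrix.mul_one, Matrix.one_mul, Matrix.mul_neg, Matrix.neg_mul,
      rule_bf, rule_hc, rS, rS', rF, rF', rH, rH']
    abel
  have hMtinv : (c * TH * hm + 1)⁻¹ = 1 - c * (T * hm) := Matrix.inv_eq_right_inv hMtW
  have hMtdet : (c * TH * hm + 1).det ≠ 0 := by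
    have hd : (c * TH * hm + 1).det * (1 - c * (T * hm)).det = 1 := by
      rw [← Matrix.det_mul, hMtW, Matrix.det_one]
    exact left_ne_zero_of_mul_eq_one hd
  refine ⟨hMdet, hMtdet, ?_, ?_, ?_⟩
  · rw [hMinv]
    simp only [Matrix.mul_add, Matrix.add_mul, Matrix.mul_sub, Matrix.sub_mul,
      Matrix.mul_assoc, Matrix.mul_one, Matrix.one_mul, Matrix.mul_neg, Matrix.neg_mul,
      rule_bf, rule_hc, rS, rS', rF, rF', rH, rH']
    abel
  · rw [hMtinv]
    simp only [Matrix.mul_add, Matrix.add_mul, Matrix.mul_sub, Matrix.sub_mul,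
      Matrix.mul_assoc, Matrix.mul_one, Matrix.one_mul, Matrix.mul_neg, Matrix.neg_mul,
      rule_bf, rule_hc, rS, rS', rF, rF', rH, rH']
    abel
  have e11 : (f * TH * -(b + hm * d) + 1) * (f * TF * b + 1)
      + -(-f * TH * hm + 0) * ((c + d * f) * TF * b + d) = 1 := by
    simp only [Matrix.mul_add, Matrix.add_mul, Matrix.mul_sub, Matrix.sub_mul,
      Matrix.mul_assoc, Matrix.mul_one, Matrix.one_mul, Matrix.mul_neg, Matrix.neg_mul,
      Matrix.zero_mul, Matrix.mul_zero, add_zero, zero_add, neg_zero, neg_neg,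
      rule_bf, rule_hc, rS, rS', rF, rF', rH, rH']
    abel
  have e12 : (f * TH * -(b + hm * d) + 1) * (-f * TF * hm + 0)
      + -(-f * TH * hm + 0) * (-(c + d * f) * TF * hm + 1) = 0 := by
    simp only [Matrix.mul_add, Matrix.add_mul, Matrix.mul_sub, Matrix.sub_mul,
      Matrix.mul_assoc, Matrix.mul_one, Matrix.one_mul, Matrix.mul_neg, Matrix.neg_mul,
      Matrix.zero_mul, Matrix.mul_zero, add_zero, zero_add, neg_zero, neg_neg,
      rule_bf, rule_hc, rS, rS', rF, rF', rH, rH']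
    abel
  have e21 : -(c * TH * (b + hm * d) + d) * (f * TF * b + 1)
      + (c * TH * hm + 1) * ((c + d * f) * TF * b + d) = 0 := by
    simp only [Matrix.mul_add, Matrix.add_mul, Matrix.mul_sub, Matrix.sub_mul,
      Matrix.mul_assoc, Matrix.mul_one, Matrix.one_mul, Matrix.mul_neg, Matrix.neg_mul,
      Matrix.zero_mul, Matrix.mul_zero, add_zero, zero_add, neg_zero, neg_neg,
      rule_bf, rule_hc, rS, rS', rF, rF', rH, rH']
    abel
  have e22 : -(c * TH * (b + hm * d) + d) * (-f * TF * hm + 0)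
      + (c * TH * hm + 1) * (-(c + d * f) * TF * hm + 1) = 1 := by
    simp only [Matrix.mul_add, Matrix.add_mul, Matrix.mul_sub, Matrix.sub_mul,
      Matrix.mul_assoc, Matrix.mul_one, Matrix.one_mul, Matrix.mul_neg, Matrix.neg_mul,
      Matrix.zero_mul, Matrix.mul_zero, add_zero, zero_add, neg_zero, neg_neg,
      rule_bf, rule_hc, rS, rS', rF, rF', rH, rH']
    abel
  rw [Matrix.fromBlocks_multiply, e11, e12, e21, e22, Matrix.fromBlocks_one]

set_option maxHeartbeats 16000000 in
lemma stmt_1_aux {n m p : ℕ} (E A : Matrix (Fin n) (Fin n) ℝ)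
    (hreg : (pencilRF A E).det ≠ 0)
    (B₂ : Matrix (Fin n) (Fin m) ℝ) (C₂ : Matrix (Fin p) (Fin n) ℝ)
    (D₂₂ : Matrix (Fin p) (Fin m) ℝ)
    (F : Matrix (Fin m) (Fin n) ℝ) (H : Matrix (Fin n) (Fin p) ℝ)
    (hF : Admissible (A + B₂ * F) E) (hH : Admissible (A + H * C₂) E) :
    IsDCF (tfm E A B₂ C₂ D₂₂)
      (tfm E (A + B₂ * F) B₂ (C₂ + D₂₂ * F) D₂₂)
      (tfm E (A + H * C₂) (B₂ + H * D₂₂) C₂ D₂₂)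
      (tfm E (A + B₂ * F) B₂ F 1)
      (tfm E (A + H * C₂) H C₂ 1)
      (tfm E (A + B₂ * F) H (-F) 0)
      (tfm E (A + H * C₂) H (-F) 0)
      (tfm E (A + B₂ * F) H (-(C₂ + D₂₂ * F)) 1)
      (tfm E (A + H * C₂) (-(B₂ + H * D₂₂)) F 1) := by
  classical
  have hpF : (RatFunc.X : RF) • toRF E - toRF (A + B₂ * F)
      = ((RatFunc.X : RF) • toRF E - toRF A) - toRF B₂ * toRF F := by
    rw [toRF_add, toRF_mul, sub_add_eq_sub_sub]
  have hpH : (RatFunc.X : RF) • toRF E - toRF (A + H * C₂)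
      = ((RatFunc.X : RF) • toRF E - toRF A) - toRF H * toRF C₂ := by
    rw [toRF_add, toRF_mul, sub_add_eq_sub_sub]
  -- determinant facts
  have hcard : Fintype.card (Fin n) = n := Fintype.card_fin n
  have hdS : ((RatFunc.X : RF) • toRF E - toRF A).det ≠ 0 := by
    intro h
    apply hreg
    have h2 : pencilRF A E = -((RatFunc.X : RF) • toRF E - toRF A) := by
      unfold pencilRF; rw [neg_sub]
    rw [h2, Matrix.det_neg, h, mul_zero]
  have hdF : (((RatFunc.X : RF) • toRF E - toRF A) - toRF B₂ * toRF F).det ≠ 0 := by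
    intro h
    apply hF.1
    have h2 : pencilRF (A + B₂ * F) E
        = -(((RatFunc.X : RF) • toRF E - toRF A) - toRF B₂ * toRF F) := by
      unfold pencilRF; rw [← hpF, neg_sub]
    rw [h2, Matrix.det_neg, h, mul_zero]
  have hdH : (((RatFunc.X : RF) • toRF E - toRF A) - toRF H * toRF C₂).det ≠ 0 := by
    intro h
    apply hH.1
    have h2 : pencilRF (A + H * C₂) E
        = -(((RatFunc.X : RF) • toRF E - toRF A) - toRF H * toRF C₂) := by
      unfold pencilRF; rw [← hpH, neg_sub]
    rw [h2, Matrix.det_neg, h, mul_zero]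
  obtain ⟨hMdet, hMtdet, hfac1, hfac2, hbez⟩ :=
    bez_algebra ((RatFunc.X : RF) • toRF E - toRF A) (toRF B₂) (toRF C₂) (toRF D₂₂)
      (toRF F) (toRF H) hdS hdF hdH
  -- tfm rewrites
  have hG : tfm E A B₂ C₂ D₂₂
      = toRF C₂ * ((RatFunc.X : RF) • toRF E - toRF A)⁻¹ * toRF B₂ + toRF D₂₂ := rfl
  have hN : tfm E (A + B₂ * F) B₂ (C₂ + D₂₂ * F) D₂₂
      = (toRF C₂ + toRF D₂₂ * toRF F)
        * (((RatFunc.X : RF) • toRF E - toRF A) - toRF B₂ * toRF F)⁻¹ * toRF B₂ + toRF D₂₂ := by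
    unfold tfm; rw [hpF, toRF_add, toRF_mul]
  have hM : tfm E (A + B₂ * F) B₂ F 1
      = toRF F * (((RatFunc.X : RF) • toRF E - toRF A) - toRF B₂ * toRF F)⁻¹ * toRF B₂ + 1 := by
    unfold tfm; rw [hpF, toRF_one]
  have hX : tfm E (A + B₂ * F) H (-F) 0
      = -toRF F * (((RatFunc.X : RF) • toRF E - toRF A) - toRF B₂ * toRF F)⁻¹ * toRF H + 0 := by
    unfold tfm; rw [hpF, toRF_neg, toRF_zero]
  have hY : tfm E (A + B₂ * F) H (-(C₂ + D₂₂ * F)) 1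
      = -(toRF C₂ + toRF D₂₂ * toRF F)
        * (((RatFunc.X : RF) • toRF E - toRF A) - toRF B₂ * toRF F)⁻¹ * toRF H + 1 := by
    unfold tfm; rw [hpF, toRF_neg, toRF_add, toRF_mul, toRF_one]
  have hNt : tfm E (A + H * C₂) (B₂ + H * D₂₂) C₂ D₂₂
      = toRF C₂ * (((RatFunc.X : RF) • toRF E - toRF A) - toRF H * toRF C₂)⁻¹
        * (toRF B₂ + toRF H * toRF D₂₂) + toRF D₂₂ := by
    unfold tfm; rw [hpH, toRF_add, toRF_mul]
  have hMt : tfm E (A + H * C₂) H C₂ 1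
      = toRF C₂ * (((RatFunc.X : RF) • toRF E - toRF A) - toRF H * toRF C₂)⁻¹ * toRF H + 1 := by
    unfold tfm; rw [hpH, toRF_one]
  have hXt : tfm E (A + H * C₂) H (-F) 0
      = -toRF F * (((RatFunc.X : RF) • toRF E - toRF A) - toRF H * toRF C₂)⁻¹ * toRF H + 0 := by
    unfold tfm; rw [hpH, toRF_neg, toRF_zero]
  have hYt : tfm E (A + H * C₂) (-(B₂ + H * D₂₂)) F 1
      = toRF F * (((RatFunc.X : RF) • toRF E - toRF A) - toRF H * toRF C₂)⁻¹
        * -(toRF B₂ + toRF H * toRF D₂₂) + 1 := by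
    unfold tfm; rw [hpH, toRF_neg, toRF_add, toRF_mul, toRF_one]
  refine ⟨mstable_tfm hF _ _ _, mstable_tfm hH _ _ _, mstable_tfm hF _ _ _,
    mstable_tfm hH _ _ _, mstable_tfm hF _ _ _, mstable_tfm hH _ _ _,
    mstable_tfm hF _ _ _, mstable_tfm hH _ _ _, ?_, ?_, ?_, ?_, ?_⟩
  · rw [hM]; exact hMdet
  · rw [hMt]; exact hMtdet
  · rw [hG, hN, hM]; exact hfac1
  · rw [hG, hMt, hNt]; exact hfac2
  · rw [hYt, hXt, hNt, hMt, hM, hX, hN, hY]; exact hbez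

/-- the state-feedback / output-injection formulas yield a doubly coprime
factorization over RH∞ of G₂₂ = C₂(sE - A)⁻¹B₂ + D₂₂, provided the pencils
A + B₂F - sE and A + HC₂ - sE are admissible. -/
theorem stmt_1 {n m p : ℕ} (E A : Matrix (Fin n) (Fin n) ℝ)
    (hreg : (pencilRF A E).det ≠ 0)
    (B₂ : Matrix (Fin n) (Fin m) ℝ) (C₂ : Matrix (Fin p) (Fin n) ℝ)
    (D₂₂ : Matrix (Fin p) (Fin m) ℝ)
    (F : Matrix (Fin m) (Fin n) ℝ) (H : Matrix (Fin n) (Fin p) ℝ)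
    (hF : Admissible (A + B₂ * F) E) (hH : Admissible (A + H * C₂) E) :
    IsDCF (tfm E A B₂ C₂ D₂₂)
      -- N  := (C₂ + D₂₂F)(sE - A_F)⁻¹B₂ + D₂₂
      (tfm E (A + B₂ * F) B₂ (C₂ + D₂₂ * F) D₂₂)
      -- Ñ  := C₂(sE - A_H)⁻¹(B₂ + HD₂₂) + D₂₂
      (tfm E (A + H * C₂) (B₂ + H * D₂₂) C₂ D₂₂)
      -- M  := F(sE - A_F)⁻¹B₂ + I
      (tfm E (A + B₂ * F) B₂ F 1)
      -- M̃  := C₂(sE - A_H)⁻¹H + I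
      (tfm E (A + H * C₂) H C₂ 1)
      -- X  := -F(sE - A_F)⁻¹H
      (tfm E (A + B₂ * F) H (-F) 0)
      -- X̃  := -F(sE - A_H)⁻¹H
      (tfm E (A + H * C₂) H (-F) 0)
      -- Y  := -(C₂ + D₂₂F)(sE - A_F)⁻¹H + I
      (tfm E (A + B₂ * F) H (-(C₂ + D₂₂ * F)) 1)
      -- Ỹ  := F(sE - A_H)⁻¹(-B₂ - HD₂₂) + I
      (tfm E (A + H * C₂) (-(B₂ + H * D₂₂)) F 1) :=
  stmt_1_aux E A hreg B₂ C₂ D₂₂ F H hF hH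

end
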